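/- arXiv:1407.3630 — 5 statements merged into one kernel-verified Lean document; each statement's English description precedes it below -/
import Mathlib

section
/- For every integer m ≥ 1 there exists an integer a with 1 ≤ a ≤ 2^m, gcd(a, 2^m) = 1, such that all partial quotients in the continued fraction expansion of a/2^m are at most 3. -/
namespace ZarembaAux

open Matrix

/-- continued fraction numerics: `pq l = (p, q)` with `[0; l] = p / q`. -/
def pq : List ℕ → ℕ × ℕ
  | [] => (0, 1)
  | c :: T => ((pq T).2, c * (pq T).2 + (pq T).1)

def pp (l : List ℕ) : ℕ := (pq l).1
def qq (l : List ℕ) : ℕ := (pq l).2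

@[simp] lemma pp_nil : pp [] = 0 := rfl
@[simp] lemma qq_nil : qq [] = 1 := rfl
@[simp] lemma pp_cons (c : ℕ) (T : List ℕ) : pp (c :: T) = qq T := rfl
@[simp] lemma qq_cons (c : ℕ) (T : List ℕ) : qq (c :: T) = c * qq T + pp T := rfl

lemma qq_pos (l : List ℕ) (h1 : ∀ c ∈ l, 1 ≤ c) : 0 < qq l := by
  induction l with
  | nil => simp
  | cons c T ih =>
    have hc : 1 ≤ c := h1 c (by simp)
    have := ih (fun d hd => h1 d (by simp [hd]))
    simp only [qq_cons]
    nlinarith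

lemma pp_pos (l : List ℕ) (h1 : ∀ c ∈ l, 1 ≤ c) (hne : l ≠ []) : 0 < pp l := by
  cases l with
  | nil => exact absurd rfl hne
  | cons c T => simpa using qq_pos T (fun d hd => h1 d (by simp [hd]))

lemma pp_lt_qq (l : List ℕ) (h1 : ∀ c ∈ l, 1 ≤ c) (hl : l.getLast? ≠ some 1) :
    pp l < qq l := by
  cases l with
  | nil => simp
  | cons c T =>
    have hc : 1 ≤ c := h1 c (by simp)
    have hT1 : ∀ d ∈ T, 1 ≤ d := fun d hd => h1 d (by simp [hd])
    have hqT : 0 < qq T := qq_pos T hT1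
    cases T with
    | nil =>
      have : c ≠ 1 := by simpa using hl
      have : 2 ≤ c := by omega
      simp only [pp_cons, qq_cons, qq_nil, pp_nil]
      omega
    | cons d T' =>
      have hppT : 0 < pp (d :: T') := pp_pos _ (fun e he => h1 e (by simp [he])) (by simp)
      have hqT' : 0 < qq T' := qq_pos T' (fun e he => h1 e (by simp [he]))
      simp only [pp_cons, qq_cons] at *
      nlinarith

lemma coprime_pp_qq (l : List ℕ) : Nat.Coprime (pp l) (qq l) := by
  induction l with
  | nil => simp [Nat.Coprime]
  | cons c T ih =>
    simp only [pp_cons, qq_cons]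
    have h : Nat.gcd (qq T) (pp T) = 1 := ih.symm
    have : Nat.gcd (qq T) (pp T + qq T * c) = 1 := by
      rwa [Nat.gcd_add_mul_left_right]
    simpa [Nat.Coprime, Nat.gcd_comm, mul_comm, add_comm] using this


def vv (l : List ℕ) : ℚ := (pp l : ℚ) / (qq l : ℚ)

lemma vv_nonneg (l : List ℕ) : 0 ≤ vv l := by
  apply div_nonneg <;> positivity

lemma vv_lt_one (l : List ℕ) (h1 : ∀ c ∈ l, 1 ≤ c) (hl : l.getLast? ≠ some 1) :
    vv l < 1 := by
  have h := pp_lt_qq l h1 hl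
  have hq := qq_pos l h1
  rw [vv, div_lt_one (by exact_mod_cast hq)]
  exact_mod_cast h

lemma vv_cons (c : ℕ) (T : List ℕ) (hT1 : ∀ d ∈ T, 1 ≤ d) (hc : 1 ≤ c) :
    vv (c :: T) = ((c : ℚ) + vv T)⁻¹ := by
  have hq : (0:ℚ) < (qq T : ℚ) := by exact_mod_cast qq_pos T hT1
  have hvT : 0 ≤ vv T := vv_nonneg T
  have hpos : (0:ℚ) < (c : ℚ) + vv T := by
    have : (1:ℚ) ≤ (c:ℚ) := by exact_mod_cast hc
    linarith
  rw [vv, vv, pp_cons, qq_cons]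
  have h2 : (c : ℚ) + (pp T : ℚ) / (qq T : ℚ) = ((c * qq T + pp T : ℕ) : ℚ) / (qq T : ℚ) := by
    push_cast
    field_simp
  rw [h2, inv_div]

lemma of_list (l : List ℕ) (h1 : ∀ c ∈ l, 1 ≤ c) (hl : l.getLast? ≠ some 1) :
    ∀ x : ℚ, Int.fract x = vv l →
      ∀ n, (GenContFract.of x).s.get? n = (l[n]?).map (fun c => ⟨1, (c : ℚ)⟩) := by
  induction l with
  | nil =>
    intro x hx n
    have hx0 : Int.fract x = 0 := by simpa [vv] using hx
    have hxi : x = ((⌊x⌋ : ℤ) : ℚ) := by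
      have : x - ⌊x⌋ = 0 := hx0
      linarith [this]
    rw [hxi, GenContFract.of_s_of_int]
    simp
  | cons c T ih =>
    intro x hx n
    have hc : 1 ≤ c := h1 c (by simp)
    have hT1 : ∀ d ∈ T, 1 ≤ d := fun d hd => h1 d (by simp [hd])
    have hTl : T.getLast? ≠ some 1 := by
      cases T with
      | nil => simp
      | cons d T' => simpa using hl
    have h0T : 0 ≤ vv T := vv_nonneg T
    have h1T : vv T < 1 := vv_lt_one T hT1 hTl
    have hxv : Int.fract x = ((c : ℚ) + vv T)⁻¹ := by rw [hx, vv_cons c T hT1 hc]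
    have hpos : (0:ℚ) < (c : ℚ) + vv T := by
      have : (1:ℚ) ≤ (c:ℚ) := by exact_mod_cast hc
      linarith
    have hne : Int.fract x ≠ 0 := by
      rw [hxv]; positivity
    cases n with
    | zero =>
      have hh := GenContFract.of_s_head hne
      rw [show (GenContFract.of x).s.get? 0 = (GenContFract.of x).s.head from rfl, hh]
      rw [hxv, inv_inv]
      have hfl : ⌊(c:ℚ) + vv T⌋ = (c : ℤ) := by
        rw [add_comm, Int.floor_add_natCast, Int.floor_eq_zero_iff.mpr (Set.mem_Ico.mpr ⟨h0T, h1T⟩)]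
        simp
      rw [hfl]
      simp
    | succ n =>
      rw [GenContFract.of_s_succ, hxv, inv_inv]
      have hfr : Int.fract ((c:ℚ) + vv T) = vv T := by
        rw [add_comm, Int.fract_add_natCast, Int.fract_eq_self.mpr ⟨h0T, h1T⟩]
      simpa using ih hT1 hTl ((c:ℚ) + vv T) hfr n


def fm (c : ℕ) : Matrix (Fin 2) (Fin 2) ℕ := !![c, 1; 1, 0]

def KM (l : List ℕ) : Matrix (Fin 2) (Fin 2) ℕ := (l.map fm).prod

@[simp] lemma KM_nil : KM [] = 1 := rfl

@[simp] lemma KM_cons (c : ℕ) (l : List ℕ) : KM (c :: l) = fm c * KM l := by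
  simp [KM]

lemma KM_append (l₁ l₂ : List ℕ) : KM (l₁ ++ l₂) = KM l₁ * KM l₂ := by
  simp [KM]

lemma fm_transpose (c : ℕ) : (fm c)ᵀ = fm c := by
  ext i j
  fin_cases i <;> fin_cases j <;> simp [fm]

lemma KM_reverse (l : List ℕ) : KM l.reverse = (KM l)ᵀ := by
  induction l with
  | nil => simp
  | cons c l ih =>
    rw [List.reverse_cons, KM_append, ih]
    have h : KM [c] = fm c := by simp [KM]
    rw [h, ← fm_transpose, ← Matrix.transpose_mul, ← KM_cons]

lemma KM_entries (l : List ℕ) : KM l 0 0 = qq l ∧ KM l 1 0 = pp l := by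
  induction l with
  | nil => constructor <;> rfl
  | cons c l ih =>
    rw [KM_cons]
    constructor <;>
      simp [Matrix.mul_apply, Fin.sum_univ_two, fm, ih.1, ih.2]

lemma sandwich (R B : List ℕ) :
    qq (R.reverse ++ B ++ R) = ((KM R)ᵀ * KM B * KM R) 0 0 := by
  rw [← (KM_entries _).1, KM_append, KM_append, KM_reverse]

lemma fold1_qq (R : List ℕ) :
    qq (R.reverse ++ [3, 1] ++ R) = (2 * qq R + pp R) ^ 2 := by
  rw [sandwich, ← (KM_entries R).1, ← (KM_entries R).2]
  simp [KM, fm, Matrix.mul_apply, Fin.sum_univ_two]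
  ring

lemma fold2_qq (R : List ℕ) :
    qq (R.reverse ++ [2, 1, 1, 1] ++ R) = 2 * (2 * qq R + pp R) ^ 2 := by
  rw [sandwich, ← (KM_entries R).1, ← (KM_entries R).2]
  simp [KM, fm, Matrix.mul_apply, Fin.sum_univ_two]
  ring


/-- Invariant: a list `2 :: M ++ [2]` with entries in `[1,3]` whose continuant is `2 ^ m`. -/
def Good (m : ℕ) : Prop :=
  ∃ M : List ℕ, (∀ c ∈ M, 1 ≤ c ∧ c ≤ 3) ∧ qq (2 :: (M ++ [2])) = 2 ^ m

lemma good_double {m : ℕ} (h : Good m) : Good (2 * m) := by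
  obtain ⟨M, hM, hq⟩ := h
  refine ⟨M.reverse ++ [3, 1] ++ M, ?_, ?_⟩
  · intro c hc
    simp only [List.mem_append, List.mem_reverse, List.mem_cons, List.not_mem_nil, or_false] at hc
    rcases hc with (h | rfl | rfl) | h
    · exact hM c h
    · omega
    · omega
    · exact hM c h
  · have hl : (2 : ℕ) :: ((M.reverse ++ [3, 1] ++ M) ++ [2]) =
        (M ++ [2]).reverse ++ [3, 1] ++ (M ++ [2]) := by simp
    rw [hl, fold1_qq]
    have h2 : 2 * qq (M ++ [2]) + pp (M ++ [2]) = qq (2 :: (M ++ [2])) := (qq_cons _ _).symm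
    rw [h2, hq, ← pow_mul, mul_comm]

lemma good_double1 {m : ℕ} (h : Good m) : Good (2 * m + 1) := by
  obtain ⟨M, hM, hq⟩ := h
  refine ⟨M.reverse ++ [2, 1, 1, 1] ++ M, ?_, ?_⟩
  · intro c hc
    simp only [List.mem_append, List.mem_reverse, List.mem_cons, List.not_mem_nil, or_false] at hc
    rcases hc with (h | rfl | rfl | rfl | rfl) | h
    · exact hM c h
    · omega
    · omega
    · omega
    · omega
    · exact hM c h
  · have hl : (2 : ℕ) :: ((M.reverse ++ [2, 1, 1, 1] ++ M) ++ [2]) =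
        (M ++ [2]).reverse ++ [2, 1, 1, 1] ++ (M ++ [2]) := by simp
    rw [hl, fold2_qq]
    have h2 : 2 * qq (M ++ [2]) + pp (M ++ [2]) = qq (2 :: (M ++ [2])) := (qq_cons _ _).symm
    rw [h2, hq, ← pow_mul, pow_succ, mul_comm 2 m, mul_comm]

lemma good_all : ∀ m : ℕ, 3 ≤ m → m ≠ 5 → Good m := by
  intro m
  induction m using Nat.strong_induction_on with
  | _ m ih =>
    intro h3 h5
    by_cases hm3 : m = 3
    · exact hm3 ▸ ⟨[1], by decide, by decide⟩
    by_cases hm4 : m = 4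
    · exact hm4 ▸ ⟨[3], by decide, by decide⟩
    by_cases hm10 : m = 10
    · exact hm10 ▸ ⟨[1, 3, 1, 3, 3, 1, 1], by decide, by decide⟩
    by_cases hm11 : m = 11
    · exact hm11 ▸ ⟨[1, 1, 2, 3, 3, 1, 1, 2], by decide, by decide⟩
    have h6 : 6 ≤ m := by omega
    rcases Nat.even_or_odd m with he | ho
    · obtain ⟨k, rfl⟩ := he
      have hk : Good k := ih k (by omega) (by omega) (by omega)
      have := good_double hk
      rwa [two_mul] at this
    · obtain ⟨k, rfl⟩ := ho
      exact good_double1 (ih k (by omega) (by omega) (by omega))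

lemma main_of_list (m : ℕ) (l : List ℕ) (h1 : ∀ c ∈ l, 1 ≤ c ∧ c ≤ 3)
    (hne : l ≠ []) (hl : l.getLast? ≠ some 1) (hq : qq l = 2 ^ m) :
    ∃ a : ℕ, 1 ≤ a ∧ a ≤ 2 ^ m ∧ Nat.gcd a (2 ^ m) = 1 ∧
      ∀ (n : ℕ) (c : ℚ),
        (GenContFract.of ((a : ℚ) / (2 ^ m : ℚ))).partDens.get? n = some c → c ≤ 3 := by
  have h1' : ∀ c ∈ l, 1 ≤ c := fun c hc => (h1 c hc).1
  refine ⟨pp l, pp_pos l h1' hne, ?_, ?_, ?_⟩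
  · rw [← hq]; exact (pp_lt_qq l h1' hl).le
  · rw [← hq]; exact coprime_pp_qq l
  · intro n c hc
    have hx : ((pp l : ℚ) / (2 ^ m : ℚ)) = vv l := by
      rw [vv, hq]; push_cast; ring
    have hfr : Int.fract (vv l) = vv l :=
      Int.fract_eq_self.mpr ⟨vv_nonneg l, vv_lt_one l h1' hl⟩
    have key := of_list l h1' hl (vv l) hfr n
    rw [hx] at hc
    simp only [GenContFract.partDens, Stream'.Seq.map_get?, key, Option.map_map] at hc
    cases hget : l[n]? with
    | none => rw [hget] at hc; simp at hc
    | some d =>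
      rw [hget] at hc
      simp only [Option.map_some] at hc
      have hd : d ∈ l := List.mem_of_getElem? hget
      have : c = (d : ℚ) := by
        have := Option.some_injective _ hc
        exact this.symm
      rw [this]
      exact_mod_cast (h1 d hd).2

end ZarembaAux

/-- Niederreiter: Zaremba's conjecture with constant 3 for powers of 2.
For every `m ≥ 1` there is `a` with `1 ≤ a ≤ 2^m`, `gcd(a, 2^m) = 1`, such that
all partial quotients of the continued fraction expansion of `a / 2^m` are at most `3`. -/
theorem zaremba_pow_two (m : ℕ) (hm : 1 ≤ m) :
    ∃ a : ℕ, 1 ≤ a ∧ a ≤ 2 ^ m ∧ Nat.gcd a (2 ^ m) = 1 ∧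
      ∀ (n : ℕ) (c : ℚ),
        (GenContFract.of ((a : ℚ) / (2 ^ m : ℚ))).partDens.get? n = some c → c ≤ 3 := by
  by_cases h1 : m = 1
  · exact h1 ▸ ZarembaAux.main_of_list 1 [2] (by decide) (by decide) (by decide) (by decide)
  by_cases h2 : m = 2
  · exact h2 ▸ ZarembaAux.main_of_list 2 [1, 3] (by decide) (by decide) (by decide) (by decide)
  by_cases h5 : m = 5
  · exact h5 ▸ ZarembaAux.main_of_list 5 [1, 3, 1, 1, 3] (by decide) (by decide) (by decide)
      (by decide)
  · obtain ⟨M, hM, hq⟩ := ZarembaAux.good_all m (by omega) h5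
    refine ZarembaAux.main_of_list m (2 :: (M ++ [2])) ?_ (by simp) ?_ hq
    · intro c hc
      simp only [List.mem_cons, List.mem_append, List.not_mem_nil, or_false] at hc
      rcases hc with rfl | h | rfl
      · omega
      · exact hM c h
      · omega
    · have : (2 : ℕ) :: (M ++ [2]) = ((2 :: M) ++ [2]) := by simp
      rw [this, List.getLast?_concat]
      simp
end

section
/- Let q be an odd prime power, b ∈ F_q, and f_b(X) = X^{(q+1)/2} + bX. Then f_b is a complete mapping of F_q if and only if b² − 1 and b² + 2b are both nonzero squares in F_q. -/
lemma cm_aux (F : Type*) [Field F] [Fintype F]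
    (hq : Odd (Fintype.card F)) (a : F) :
    Function.Bijective (fun x : F => x ^ ((Fintype.card F + 1) / 2) + a * x) ↔
    (∃ c : F, c ≠ 0 ∧ c ^ 2 = a ^ 2 - 1) := by
  classical
  have hchar : ringChar F ≠ 2 := by
    intro h
    have := FiniteField.even_card_of_char_two (F := F) h
    obtain ⟨k, hk⟩ := hq
    omega
  have he : (Fintype.card F + 1) / 2 = Fintype.card F / 2 + 1 := by
    obtain ⟨k, hk⟩ := hq
    omega
  have hne : (1 : F) ≠ -1 := fun h => Ring.neg_one_ne_one_of_char_ne_two hchar h.symm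
  have hf : ∀ x : F, x ^ ((Fintype.card F + 1) / 2) + a * x
      = x * (x ^ (Fintype.card F / 2) + a) := by
    intro x; rw [he]; ring
  have hnonsq_pow : ∀ w : F, w ≠ 0 → ¬ IsSquare w → w ^ (Fintype.card F / 2) = -1 := by
    intro w hw hns
    rcases FiniteField.pow_dichotomy hchar hw with h1 | h1
    · exact absurd ((FiniteField.isSquare_iff hchar hw).mpr h1) hns
    · exact h1
  constructor
  · rintro ⟨hinj, -⟩
    have ha1 : a + 1 ≠ 0 := by
      intro h
      have h1 : (1 : F) ^ ((Fintype.card F + 1) / 2) + a * 1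
          = (0 : F) ^ ((Fintype.card F + 1) / 2) + a * 0 := by
        rw [hf 1, hf 0, one_pow]
        rw [show (1 : F) + a = 0 from by linear_combination h]
        ring
      exact one_ne_zero (hinj h1)
    have ha2 : a - 1 ≠ 0 := by
      intro h
      obtain ⟨u, hu⟩ := FiniteField.exists_nonsquare (F := F) hchar
      have hu0 : u ≠ 0 := by rintro rfl; exact hu ⟨0, (mul_zero 0).symm⟩
      have h1 : u ^ ((Fintype.card F + 1) / 2) + a * u
          = (0 : F) ^ ((Fintype.card F + 1) / 2) + a * 0 := by
        rw [hf u, hf 0, hnonsq_pow u hu0 hu]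
        rw [show (-1 : F) + a = 0 from by linear_combination h]
        ring
      exact hu0 (hinj h1)
    by_cases hs : IsSquare (a ^ 2 - 1)
    · obtain ⟨d, hd⟩ := hs
      have hd0 : d ≠ 0 := by
        intro h
        rw [h, mul_zero] at hd
        rcases mul_eq_zero.mp (show (a + 1) * (a - 1) = 0 from by linear_combination hd) with
          h' | h'
        · exact ha1 h'
        · exact ha2 h'
      exact ⟨d, hd0, by rw [sq]; exact hd.symm⟩
    · exfalso
      set y : F := (a + 1) * (a - 1)⁻¹ with hy
      have hy0 : y ≠ 0 := mul_ne_zero ha1 (inv_ne_zero ha2)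
      have hys : ¬ IsSquare y := by
        rintro ⟨d, hd⟩
        apply hs
        refine ⟨d * (a - 1), ?_⟩
        have h1 : a ^ 2 - 1 = y * (a - 1) ^ 2 := by
          rw [hy]
          field_simp
          ring
        rw [h1, hd]
        ring
      have hcol : (1 : F) ^ ((Fintype.card F + 1) / 2) + a * 1
          = y ^ ((Fintype.card F + 1) / 2) + a * y := by
        rw [hf 1, hf y, one_pow, hnonsq_pow y hy0 hys]
        rw [hy]
        field_simp
        ring
      have h1y : (1 : F) = y := hinj hcol
      exact hys (h1y ▸ IsSquare.one)
  · rintro ⟨c, hc0, hc⟩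
    have hsq : IsSquare (a ^ 2 - 1) := ⟨c, by rw [← hc]; ring⟩
    have hprod : (a + 1) * (a - 1) ≠ 0 := by
      rw [show (a + 1) * (a - 1) = c ^ 2 from by linear_combination -hc]
      exact pow_ne_zero _ hc0
    have ha1 : a + 1 ≠ 0 := fun h => hprod (by rw [h, zero_mul])
    have ha2 : a - 1 ≠ 0 := fun h => hprod (by rw [h, mul_zero])
    rw [Finite.injective_iff_bijective.symm]
    intro x z hxz
    simp only [hf] at hxz
    have hzero : ∀ w : F, w ≠ 0 → w * (w ^ (Fintype.card F / 2) + a) ≠ 0 := by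
      intro w hw
      refine mul_ne_zero hw ?_
      rcases FiniteField.pow_dichotomy hchar hw with h1 | h1 <;> rw [h1] <;> intro h
      · exact ha1 (by linear_combination h)
      · exact ha2 (by linear_combination h)
    by_cases hx0 : x = 0
    · subst hx0
      by_contra hz0
      exact hzero z (Ne.symm hz0) (by rw [← hxz]; ring)
    by_cases hz0 : z = 0
    · subst hz0
      exact absurd (by rw [hxz]; ring) (hzero x hx0)
    have hsq_of : ∀ w : F, w ≠ 0 → w ^ (Fintype.card F / 2) = 1 → IsSquare w := fun w hw h1 =>
      (FiniteField.isSquare_iff hchar hw).mpr h1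
    have hmix : ∀ u v : F, u ≠ 0 → v ≠ 0 → u ^ (Fintype.card F / 2) = 1 →
        v ^ (Fintype.card F / 2) = -1 →
        u * (u ^ (Fintype.card F / 2) + a) = v * (v ^ (Fintype.card F / 2) + a) → False := by
      intro u v hu hv hu1 hv1 heq
      rw [hu1, hv1] at heq
      have key : (a - 1) ^ 2 * v = (a ^ 2 - 1) * u := by linear_combination (1 - a) * heq
      have hveq : v = ((a - 1)⁻¹) ^ 2 * ((a ^ 2 - 1) * u) := by
        rw [← key]
        field_simp
      have hvsq : IsSquare v := by
        rw [hveq]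
        exact (IsSquare.sq _).mul (hsq.mul (hsq_of u hu hu1))
      have h := (FiniteField.isSquare_iff hchar hv).mp hvsq
      rw [hv1] at h
      exact hne h.symm
    rcases FiniteField.pow_dichotomy hchar hx0 with h1 | h1 <;>
      rcases FiniteField.pow_dichotomy hchar hz0 with h2 | h2
    · rw [h1, h2] at hxz
      exact mul_right_cancel₀ (fun h => ha1 (by linear_combination h)) hxz
    · exact (hmix x z hx0 hz0 h1 h2 hxz).elim
    · exact (hmix z x hz0 hx0 h2 h1 hxz.symm).elim
    · rw [h1, h2] at hxz
      exact mul_right_cancel₀ (fun h => ha2 (by linear_combination h)) hxz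

/-- Niederreiter–Robinson: for odd `q`, `f_b(X) = X^((q+1)/2) + bX` is a complete mapping of
`F_q` if and only if `b² - 1` and `b² + 2b` are both squares of nonzero elements of `F_q`. -/
theorem complete_mapping_iff (F : Type*) [Field F] [Fintype F]
    (hq : Odd (Fintype.card F)) (b : F) :
    (Function.Bijective (fun x : F => x ^ ((Fintype.card F + 1) / 2) + b * x) ∧
      Function.Bijective (fun x : F => (x ^ ((Fintype.card F + 1) / 2) + b * x) + x)) ↔
    ((∃ c : F, c ≠ 0 ∧ c ^ 2 = b ^ 2 - 1) ∧ (∃ c : F, c ≠ 0 ∧ c ^ 2 = b ^ 2 + 2 * b)) := by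
  have h2 : (fun x : F => (x ^ ((Fintype.card F + 1) / 2) + b * x) + x) =
      (fun x : F => x ^ ((Fintype.card F + 1) / 2) + (b + 1) * x) := by
    funext x; ring
  rw [h2, cm_aux F hq b, cm_aux F hq (b + 1)]
  have h3 : (b + 1) ^ 2 - 1 = b ^ 2 + 2 * b := by ring
  rw [h3]
end

section
/- Let f be a permutation of F_q such that f(X) + X is also a permutation (f is a complete mapping). Then the check-digit system Σ_{i=0}^{s-1} f^{(i)}(a_{i+1}) = c detects all twin errors: if a valid word has a_j = a_{j+1} = a and replacing both by b (for adjacent positions j, j+1) yields another valid word, then a = b. -/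
/-- If `f` is a complete mapping of `F_q` (both `f` and `x ↦ f(x) + x` are bijections), then
the check-digit system `∑_{i=0}^{s-1} f^{(i)}(a_{i+1}) = c` detects all twin errors: if a
valid word has equal entries `a` in two adjacent positions and replacing both by `b` yields
another valid word, then `a = b`. -/
theorem check_digit_detects_twin_errors (F : Type*) [Field F] [Fintype F]
    (f : F → F) (hf : Function.Bijective f)
    (hfc : Function.Bijective (fun x : F => f x + x))
    (c : F) (s : ℕ) (w : Fin s → F) (j k : Fin s) (hjk : (k : ℕ) = (j : ℕ) + 1)
    (α β : F) (hwj : w j = α) (hwk : w k = α)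
    (hw : ∑ i : Fin s, f^[(i : ℕ)] (w i) = c)
    (hw' : ∑ i : Fin s, f^[(i : ℕ)] (Function.update (Function.update w j β) k β i) = c) :
    α = β := by
  set u := Function.update (Function.update w j β) k β with hu
  have hne : j ≠ k := by
    intro h; rw [h] at hjk; omega
  have huj : u j = β := by
    simp [hu, Function.update_of_ne hne, Function.update_self]
  have huk : u k = β := by simp [hu]
  have hzero : ∑ i : Fin s, (f^[(i : ℕ)] (u i) - f^[(i : ℕ)] (w i)) = 0 := by
    rw [Finset.sum_sub_distrib, hw, hw']; ring
  have hsum : ∑ i : Fin s, (f^[(i : ℕ)] (u i) - f^[(i : ℕ)] (w i))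
      = (f^[(j : ℕ)] (u j) - f^[(j : ℕ)] (w j))
        + (f^[(k : ℕ)] (u k) - f^[(k : ℕ)] (w k)) := by
    refine Finset.sum_eq_add j k hne (by
      rintro i _ ⟨hij, hik⟩
      have h1 : u i = w i := by
        simp [hu, Function.update_of_ne hik, Function.update_of_ne hij]
      rw [h1]; ring) (fun h => absurd (Finset.mem_univ j) h)
      (fun h => absurd (Finset.mem_univ k) h)
  rw [hsum, huj, huk, hwj, hwk] at hzero
  have hkey : f^[(j : ℕ)] β + f^[(k : ℕ)] β = f^[(j : ℕ)] α + f^[(k : ℕ)] α := by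
    linear_combination hzero
  rw [hjk, Function.iterate_succ_apply', Function.iterate_succ_apply'] at hkey
  have h2 : f^[(j : ℕ)] β = f^[(j : ℕ)] α := by
    have := hfc.injective (a₁ := f^[(j : ℕ)] β) (a₂ := f^[(j : ℕ)] α) (by
      simpa [add_comm] using hkey)
    exact this
  exact ((hf.iterate (j : ℕ)).injective h2).symm
end

section
/- Let f be a permutation of F_q such that −f(X) is a complete mapping (i.e., x ↦ x − f(x) is also a bijection). Then the check-digit system Σ_{i=0}^{s-1} f^{(i)}(a_{i+1}) = c detects all neighbor transpositions: if a valid word with adjacent entries a ≠ b in positions j, j+1 remains valid after swapping them, contradiction; hence a = b. -/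
/-- If `f` is a permutation of `F_q` such that `-f` is a complete mapping (i.e. `x ↦ x - f(x)`
is also a bijection), then the check-digit system `∑_{i=0}^{s-1} f^{(i)}(a_{i+1}) = c`
detects all neighbor transpositions: if a valid word remains valid after swapping two
adjacent entries, then these entries are equal. -/
theorem check_digit_detects_neighbor_transpositions (F : Type*) [Field F] [Fintype F]
    (f : F → F) (hf : Function.Bijective f)
    (hfc : Function.Bijective (fun x : F => x - f x))
    (c : F) (s : ℕ) (w : Fin s → F) (j k : Fin s) (hjk : (k : ℕ) = (j : ℕ) + 1)
    (hw : ∑ i : Fin s, f^[(i : ℕ)] (w i) = c)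
    (hw' : ∑ i : Fin s, f^[(i : ℕ)] (w (Equiv.swap j k i)) = c) :
    w j = w k := by
  have hne : j ≠ k := by
    intro h; rw [h] at hjk; omega
  set g : Fin s → F := fun i => f^[(i : ℕ)] (w (Equiv.swap j k i)) - f^[(i : ℕ)] (w i) with hg
  have h0 : ∑ i : Fin s, g i = 0 := by
    simp only [hg, Finset.sum_sub_distrib, hw, hw', sub_self]
  have h1 : ∑ i ∈ ({j, k} : Finset (Fin s)), g i = 0 := by
    rw [Finset.sum_subset (Finset.subset_univ _) ?_, h0]
    intro x _ hx
    simp only [Finset.mem_insert, Finset.mem_singleton, not_or] at hx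
    simp [hg, Equiv.swap_apply_of_ne_of_ne hx.1 hx.2]
  rw [Finset.sum_pair hne] at h1
  simp only [hg, Equiv.swap_apply_left, Equiv.swap_apply_right] at h1
  have hkiter : f^[(k : ℕ)] = f ∘ f^[(j : ℕ)] := by
    rw [hjk, Function.iterate_succ']
  rw [hkiter] at h1
  set u := f^[(j : ℕ)] (w j)
  set v := f^[(j : ℕ)] (w k)
  have huv : u - f u = v - f v := by
    simp only [Function.comp_apply] at h1
    have h1' : v - u + (f u - f v) = 0 := h1
    linear_combination -h1'
  have : u = v := hfc.injective huv
  exact (hf.iterate (j : ℕ)).injective this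
end

section
/- Let b ≥ 2 be an integer, s ≥ 1, and let C_1, ..., C_s be m×m matrices over F_b (b prime). The digital point set {x_0,...,x_{b^m−1}} they generate is a (0, m, s)-net in base b if and only if for all nonnegative integers d_1,...,d_s with d_1 + ... + d_s = m, the collection consisting of the first d_j rows of C_j for j = 1,...,s is linearly independent over F_b. -/
open scoped Classical in
/-- A `(t,m,s)`-net in base `b`: a multiset of `b^m` points in `[0,1)^s` such that every
elementary interval `∏_j [a_j/b^{d_j}, (a_j+1)/b^{d_j})` of volume `b^{t-m}`
(i.e. with `∑_j d_j = m - t`) contains exactly `b^t` points. -/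
def IsNet (b s m t : ℕ) (P : Multiset (Fin s → ℝ)) : Prop :=
  Multiset.card P = b ^ m ∧
  (∀ x ∈ P, ∀ j, 0 ≤ x j ∧ x j < 1) ∧
  ∀ d a : Fin s → ℕ, (∑ j, d j) = m - t → (∀ j, a j < b ^ d j) →
    Multiset.card (P.filter fun x => ∀ j,
      (a j : ℝ) / (b : ℝ) ^ d j ≤ x j ∧ x j < ((a j : ℝ) + 1) / (b : ℝ) ^ d j) = b ^ t

/-- The `r`-th base-`b` digit of `n`, as an element of `F_b = ZMod b`. -/
def digitVec (b m n : ℕ) : Fin m → ZMod b := fun r => ((n / b ^ (r : ℕ)) % b : ℕ)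

/-- The `n`-th point of the digital point set generated by matrices `C_1, …, C_s` over
`F_b`: its `j`-th coordinate is `∑_{r=1}^m y_{n,j,r} b^{-r}` where
`(y_{n,j,1}, …, y_{n,j,m})ᵀ = C_j · (n_0, …, n_{m-1})ᵀ`. -/
noncomputable def digitalPoint (b m s : ℕ) (C : Fin s → Matrix (Fin m) (Fin m) (ZMod b))
    (n : ℕ) : Fin s → ℝ :=
  fun j => ∑ r : Fin m, (((C j).mulVec (digitVec b m n) r).val : ℝ) / (b : ℝ) ^ ((r : ℕ) + 1)

section DigitLemmas

variable {b : ℕ}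

lemma enc_lt (hb : 1 ≤ b) {d : ℕ} {z : ℕ → ℕ} (hz : ∀ i < d, z i < b) :
    ∑ i ∈ Finset.range d, z i * b ^ i < b ^ d := by
  induction d with
  | zero => simp
  | succ d ih =>
    rw [Finset.sum_range_succ, pow_succ]
    have h1 := ih (fun i hi => hz i (Nat.lt_succ_of_lt hi))
    have h2 : z d * b ^ d ≤ (b - 1) * b ^ d :=
      Nat.mul_le_mul_right _ (by have := hz d (Nat.lt_succ_self d); omega)
    have h3 : (b - 1) * b ^ d = b ^ d * b - b ^ d := by
      rw [Nat.sub_mul, one_mul, Nat.mul_comm]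
    have h4 : b ^ d ≤ b ^ d * b := Nat.le_mul_of_pos_right _ hb
    omega

lemma enc_split {k d : ℕ} (hk : k ≤ d) (z : ℕ → ℕ) :
    ∑ i ∈ Finset.range d, z i * b ^ i
      = (∑ i ∈ Finset.range k, z i * b ^ i)
        + b ^ k * ∑ i ∈ Finset.range (d - k), z (k + i) * b ^ i := by
  rw [Finset.mul_sum]
  rw [Finset.range_eq_Ico, ← Finset.sum_Ico_consecutive _ (Nat.zero_le k) hk,
    ← Finset.range_eq_Ico, Finset.sum_Ico_eq_sum_range]
  congr 1
  refine Finset.sum_congr rfl fun i _ => ?_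
  rw [pow_add]; ring

lemma enc_div (hb : 1 ≤ b) {k d : ℕ} (hk : k ≤ d) {z : ℕ → ℕ} (hz : ∀ i < d, z i < b) :
    (∑ i ∈ Finset.range d, z i * b ^ i) / b ^ k
      = ∑ i ∈ Finset.range (d - k), z (k + i) * b ^ i := by
  rw [enc_split hk z, Nat.add_mul_div_left _ _ (show 0 < b ^ k from Nat.pow_pos hb),
    Nat.div_eq_of_lt (enc_lt hb fun i hi => hz i (lt_of_lt_of_le hi hk)), zero_add]

lemma enc_digit (hb : 1 ≤ b) {d : ℕ} {z : ℕ → ℕ} (hz : ∀ i < d, z i < b) {r : ℕ} (hr : r < d) :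
    (∑ i ∈ Finset.range d, z i * b ^ i) / b ^ r % b = z r := by
  rw [enc_div hb (le_of_lt hr) hz]
  have h1 : 1 ≤ d - r := by omega
  rw [enc_split h1 (fun i => z (r + i))]
  simp only [Finset.sum_range_one, pow_zero, mul_one, pow_one, Nat.add_zero]
  rw [Nat.add_mul_mod_self_left, Nat.mod_eq_of_lt (hz r hr)]

lemma enc_inj (hb : 1 ≤ b) {d : ℕ} {z z' : ℕ → ℕ} (hz : ∀ i < d, z i < b)
    (hz' : ∀ i < d, z' i < b)
    (h : (∑ i ∈ Finset.range d, z i * b ^ i) = ∑ i ∈ Finset.range d, z' i * b ^ i) :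
    ∀ i < d, z i = z' i := fun i hi => by
  rw [← enc_digit hb hz hi, h, enc_digit hb hz' hi]

lemma digit_sum (hb : 1 ≤ b) (n : ℕ) (d : ℕ) :
    ∑ i ∈ Finset.range d, (n / b ^ i % b) * b ^ i = n % b ^ d := by
  induction d with
  | zero => simp [Nat.mod_one]
  | succ d ih =>
    rw [Finset.sum_range_succ, ih, pow_succ]
    have key : n % (b ^ d * b) = n % b ^ d + b ^ d * (n / b ^ d % b) := by
      have hq : n / b ^ d % b < b := Nat.mod_lt _ (by omega)
      have h4 : n % b ^ d < b ^ d := Nat.mod_lt _ (show 0 < b ^ d from Nat.pow_pos hb)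
      have hlt : b ^ d * (n / b ^ d % b) + n % b ^ d < b ^ d * b := by
        have h2 : b ^ d * (n / b ^ d % b) ≤ b ^ d * (b - 1) :=
          Nat.mul_le_mul_left _ (by omega)
        have h3 : b ^ d * (b - 1) = b ^ d * b - b ^ d := by rw [Nat.mul_sub, mul_one]
        have h5 : b ^ d ≤ b ^ d * b := Nat.le_mul_of_pos_right _ hb
        omega
      conv_lhs => rw [← Nat.div_add_mod n (b ^ d)]
      rw [Nat.add_mod, Nat.mul_mod_mul_left,
        Nat.mod_eq_of_lt (show n % b ^ d < b ^ d * b from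
          lt_of_lt_of_le h4 (Nat.le_mul_of_pos_right _ hb)),
        Nat.mod_eq_of_lt hlt]
      omega
    rw [key, Nat.mul_comm]

lemma nat_div_eq_iff {k N a : ℕ} (hk : 0 < k) :
    N / k = a ↔ a * k ≤ N ∧ N < (a + 1) * k := by
  rw [← Nat.le_div_iff_mul_le hk, ← Nat.div_lt_iff_lt_mul hk]
  omega

end DigitLemmas
section DigitVec

variable {b m : ℕ}

/-- Total digit function of a `ZMod` vector. -/
def digitVal (b m : ℕ) (v : Fin m → ZMod b) : ℕ → ℕ :=
  fun i => if h : i < m then (v ⟨i, h⟩).val else 0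

lemma digitVal_lt [NeZero b] (v : Fin m → ZMod b) (i : ℕ) : digitVal b m v i < b := by
  unfold digitVal
  split
  · exact ZMod.val_lt _
  · exact Nat.pos_of_ne_zero (NeZero.ne b)

/-- Inverse of `digitVec`. -/
def encode (b m : ℕ) (v : Fin m → ZMod b) : ℕ :=
  ∑ i ∈ Finset.range m, digitVal b m v i * b ^ i

lemma encode_lt [NeZero b] (v : Fin m → ZMod b) : encode b m v < b ^ m :=
  enc_lt (Nat.pos_of_ne_zero (NeZero.ne b)) (fun i _ => digitVal_lt v i)

lemma digitVec_encode [NeZero b] (v : Fin m → ZMod b) : digitVec b m (encode b m v) = v := by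
  have hb : 1 ≤ b := Nat.pos_of_ne_zero (NeZero.ne b)
  funext r
  show ((encode b m v / b ^ (r : ℕ) % b : ℕ) : ZMod b) = v r
  unfold encode
  rw [enc_digit hb (fun i _ => digitVal_lt v i) r.isLt]
  unfold digitVal
  rw [dif_pos r.isLt]
  exact ZMod.natCast_rightInverse (v r)

lemma encode_digitVec [NeZero b] {n : ℕ} (hn : n < b ^ m) :
    encode b m (digitVec b m n) = n := by
  have hb : 1 ≤ b := Nat.pos_of_ne_zero (NeZero.ne b)
  unfold encode
  rw [Finset.sum_congr rfl (fun i hi => ?_), digit_sum hb n m, Nat.mod_eq_of_lt hn]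
  unfold digitVal
  rw [dif_pos (Finset.mem_range.mp hi)]
  congr 1
  exact ZMod.val_natCast_of_lt (Nat.mod_lt _ hb)

open Finset in
lemma card_digit_filter [NeZero b] (Q : (Fin m → ZMod b) → Prop) [DecidablePred Q] :
    ((Finset.range (b ^ m)).filter fun n => Q (digitVec b m n)).card
      = (Finset.univ.filter Q).card := by
  refine Finset.card_bij' (fun n _ => digitVec b m n) (fun v _ => encode b m v) ?_ ?_ ?_ ?_
  · intro n hn
    simp only [mem_filter, mem_univ, true_and]
    exact (mem_filter.mp hn).2
  · intro v hv
    simp only [mem_filter, mem_range]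
    exact ⟨encode_lt v, by rw [digitVec_encode]; exact (mem_filter.mp hv).2⟩
  · intro n hn
    exact encode_digitVec (mem_range.mp (mem_filter.mp hn).1)
  · intro v _
    exact digitVec_encode v

end DigitVec
section Coord

variable {b m : ℕ}

/-- Total version of the digit string `y_{n,j,r}`. -/
def rowVal (b m : ℕ) (A : Matrix (Fin m) (Fin m) (ZMod b)) (v : Fin m → ZMod b) : ℕ → ℕ :=
  fun r => if h : r < m then (A.mulVec v ⟨r, h⟩).val else 0

lemma rowVal_lt [NeZero b] (A : Matrix (Fin m) (Fin m) (ZMod b)) (v : Fin m → ZMod b) (r : ℕ) :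
    rowVal b m A v r < b := by
  unfold rowVal
  split
  · exact ZMod.val_lt _
  · exact Nat.pos_of_ne_zero (NeZero.ne b)

/-- The coordinate as an integer numerator (most significant digit first). -/
def coordNat (b m : ℕ) (A : Matrix (Fin m) (Fin m) (ZMod b)) (v : Fin m → ZMod b) : ℕ :=
  ∑ i ∈ Finset.range m, rowVal b m A v (m - 1 - i) * b ^ i

lemma coordNat_lt [NeZero b] (A : Matrix (Fin m) (Fin m) (ZMod b)) (v : Fin m → ZMod b) :
    coordNat b m A v < b ^ m :=
  enc_lt (Nat.pos_of_ne_zero (NeZero.ne b)) (fun i _ => rowVal_lt A v _)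

lemma digitalPoint_coord {s : ℕ} (hb : 1 ≤ b) (C : Fin s → Matrix (Fin m) (Fin m) (ZMod b))
    (n : ℕ) (j : Fin s) :
    digitalPoint b m s C n j
      = (coordNat b m (C j) (digitVec b m n) : ℝ) / (b : ℝ) ^ m := by
  have hb0 : (0 : ℝ) < (b : ℝ) := by exact_mod_cast hb
  unfold digitalPoint coordNat
  push_cast
  rw [Finset.sum_div]
  rw [show (∑ r : Fin m, ((((C j).mulVec (digitVec b m n)) r).val : ℝ) / (b : ℝ) ^ ((r : ℕ) + 1))
      = ∑ r ∈ Finset.range m, (rowVal b m (C j) (digitVec b m n) r : ℝ) / (b : ℝ) ^ (r + 1) from by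
    rw [← Fin.sum_univ_eq_sum_range (fun r => (rowVal b m (C j) (digitVec b m n) r : ℝ) / (b:ℝ) ^ (r + 1)) m]
    refine Finset.sum_congr rfl fun r _ => ?_
    unfold rowVal
    rw [dif_pos r.isLt]]
  rw [← Finset.sum_range_reflect]
  refine Finset.sum_congr rfl fun i hi => ?_
  have him : i < m := Finset.mem_range.mp hi
  have hpow : (b : ℝ) ^ m = (b : ℝ) ^ (m - 1 - i + 1) * (b : ℝ) ^ i := by
    rw [← pow_add]; congr 1; omega
  rw [hpow, mul_comm ((b : ℝ) ^ (m - 1 - i + 1)), ← div_div, mul_div_assoc,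
    div_self (by positivity), mul_one]

lemma interval_iff (hb : 1 ≤ b) {d a N : ℕ} (hd : d ≤ m) (ha : a < b ^ d) (hN : N < b ^ m) :
    (((a : ℝ) / (b : ℝ) ^ d ≤ (N : ℝ) / (b : ℝ) ^ m) ∧
      (N : ℝ) / (b : ℝ) ^ m < ((a : ℝ) + 1) / (b : ℝ) ^ d)
      ↔ N / b ^ (m - d) = a := by
  have hb0 : (0 : ℝ) < (b : ℝ) := by exact_mod_cast hb
  have hk : 0 < b ^ (m - d) := Nat.pow_pos hb
  rw [nat_div_eq_iff hk]
  rw [div_le_div_iff₀ (by positivity) (by positivity),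
    div_lt_div_iff₀ (by positivity) (by positivity)]
  have hpow : (b : ℝ) ^ m = (b : ℝ) ^ (m - d) * (b : ℝ) ^ d := by
    rw [← pow_add]; congr 1; omega
  rw [hpow]
  constructor
  · rintro ⟨h1, h2⟩
    constructor
    · have : ((a * b ^ (m - d) : ℕ) : ℝ) * (b : ℝ) ^ d ≤ (N : ℝ) * (b : ℝ) ^ d := by
        push_cast; nlinarith
      exact_mod_cast le_of_mul_le_mul_right (by exact_mod_cast this) (by positivity)
    · have : ((N : ℕ) : ℝ) * (b : ℝ) ^ d < (((a + 1) * b ^ (m - d) : ℕ) : ℝ) * (b : ℝ) ^ d := by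
        push_cast; nlinarith
      exact_mod_cast lt_of_mul_lt_mul_right (by exact_mod_cast this) (by positivity)
  · rintro ⟨h1, h2⟩
    have h1' : ((a * b ^ (m - d) : ℕ) : ℝ) ≤ (N : ℝ) := by exact_mod_cast h1
    have h2' : ((N : ℕ) : ℝ) < (((a + 1) * b ^ (m - d) : ℕ) : ℝ) := by exact_mod_cast h2
    push_cast at h1' h2'
    have hd0 : (0 : ℝ) < (b : ℝ) ^ d := by positivity
    constructor
    · calc (a : ℝ) * ((b : ℝ) ^ (m - d) * (b : ℝ) ^ d)
          = ((a : ℝ) * (b : ℝ) ^ (m - d)) * (b : ℝ) ^ d := by ring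
        _ ≤ (N : ℝ) * (b : ℝ) ^ d := mul_le_mul_of_nonneg_right h1' hd0.le
    · calc (N : ℝ) * (b : ℝ) ^ d
          < (((a : ℝ) + 1) * (b : ℝ) ^ (m - d)) * (b : ℝ) ^ d :=
            mul_lt_mul_of_pos_right h2' hd0
        _ = ((a : ℝ) + 1) * ((b : ℝ) ^ (m - d) * (b : ℝ) ^ d) := by ring

lemma coordNat_div [NeZero b] {d : ℕ} (hd : d ≤ m) (A : Matrix (Fin m) (Fin m) (ZMod b))
    (v : Fin m → ZMod b) :
    coordNat b m A v / b ^ (m - d)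
      = ∑ i ∈ Finset.range d, rowVal b m A v (d - 1 - i) * b ^ i := by
  have hb : 1 ≤ b := Nat.pos_of_ne_zero (NeZero.ne b)
  unfold coordNat
  rw [enc_div hb (Nat.sub_le m d) (fun i _ => rowVal_lt A v _)]
  have hmd : m - (m - d) = d := by omega
  rw [hmd]
  refine Finset.sum_congr rfl fun i hi => ?_
  have : m - 1 - (m - d + i) = d - 1 - i := by
    have := Finset.mem_range.mp hi; omega
  rw [this]

end Coord
section Selection

variable {b m s : ℕ}

/-- Encode the prescribed digits of the `j`-th coordinate from the values of the
selected rows. -/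
def encSel (b : ℕ) {m s : ℕ} (d : Fin s → ℕ)
    (w : {p : Fin s × Fin m // (p.2 : ℕ) < d p.1} → ZMod b) (j : Fin s) : ℕ :=
  ∑ i ∈ Finset.range (d j),
    (if h : d j - 1 - i < m ∧ d j - 1 - i < d j then
      (w ⟨(j, ⟨d j - 1 - i, h.1⟩), h.2⟩).val else 0) * b ^ i

lemma encSel_lt [NeZero b] (d : Fin s → ℕ)
    (w : {p : Fin s × Fin m // (p.2 : ℕ) < d p.1} → ZMod b) (j : Fin s) :
    encSel b d w j < b ^ d j := by
  refine enc_lt (Nat.pos_of_ne_zero (NeZero.ne b)) fun i _ => ?_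
  split
  · exact ZMod.val_lt _
  · exact Nat.pos_of_ne_zero (NeZero.ne b)

lemma encSel_mulVec [NeZero b] {d : Fin s → ℕ} (hdm : ∀ j, d j ≤ m)
    (C : Fin s → Matrix (Fin m) (Fin m) (ZMod b)) (v : Fin m → ZMod b) (j : Fin s) :
    encSel b d (fun p : {p : Fin s × Fin m // (p.2 : ℕ) < d p.1} =>
        (C p.1.1).mulVec v p.1.2) j
      = ∑ i ∈ Finset.range (d j), rowVal b m (C j) v (d j - 1 - i) * b ^ i := by
  refine Finset.sum_congr rfl fun i hi => ?_
  have hi' : i < d j := Finset.mem_range.mp hi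
  have h1 : d j - 1 - i < d j := by omega
  have h2 : d j - 1 - i < m := lt_of_lt_of_le h1 (hdm j)
  rw [dif_pos (⟨h2, h1⟩ : d j - 1 - i < m ∧ d j - 1 - i < d j)]
  unfold rowVal
  rw [dif_pos h2]

lemma encSel_inj [NeZero b] {d : Fin s → ℕ}
    {w w' : {p : Fin s × Fin m // (p.2 : ℕ) < d p.1} → ZMod b}
    (h : ∀ j, encSel b d w j = encSel b d w' j) : w = w' := by
  have hb : 1 ≤ b := Nat.pos_of_ne_zero (NeZero.ne b)
  funext p
  obtain ⟨⟨j, r⟩, hp⟩ := p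
  have hp' : (r : ℕ) < d j := hp
  set i : ℕ := d j - 1 - (r : ℕ) with hi
  have hid : i < d j := by omega
  have hidx : d j - 1 - i = (r : ℕ) := by omega
  have hbd : ∀ (u : {p : Fin s × Fin m // (p.2 : ℕ) < d p.1} → ZMod b), ∀ i' < d j,
      (if h : d j - 1 - i' < m ∧ d j - 1 - i' < d j then
        (u ⟨(j, ⟨d j - 1 - i', h.1⟩), h.2⟩).val else 0) < b := by
    intro u i' _
    split
    · exact ZMod.val_lt _
    · exact Nat.pos_of_ne_zero (NeZero.ne b)
  have key := enc_inj hb (hbd w) (hbd w') (h j) i hid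
  have h1 : d j - 1 - i < d j := by omega
  have h2 : d j - 1 - i < m := by rw [hidx]; exact r.isLt
  rw [dif_pos (⟨h2, h1⟩ : d j - 1 - i < m ∧ d j - 1 - i < d j),
    dif_pos (⟨h2, h1⟩ : d j - 1 - i < m ∧ d j - 1 - i < d j)] at key
  have hfin : (⟨d j - 1 - i, h2⟩ : Fin m) = r := Fin.ext hidx
  have hpe : (⟨(j, ⟨d j - 1 - i, h2⟩), h1⟩ : {p : Fin s × Fin m // (p.2 : ℕ) < d p.1})
      = ⟨(j, r), hp⟩ := by
    apply Subtype.ext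
    dsimp only
    rw [hfin]
  rw [hpe] at key
  exact ZMod.val_injective b key

lemma encSel_exists [NeZero b] {d : Fin s → ℕ} (hdm : ∀ j, d j ≤ m) (a : Fin s → ℕ)
    (ha : ∀ j, a j < b ^ d j) :
    ∃ w : {p : Fin s × Fin m // (p.2 : ℕ) < d p.1} → ZMod b,
      ∀ j, encSel b d w j = a j := by
  have hb : 1 ≤ b := Nat.pos_of_ne_zero (NeZero.ne b)
  refine ⟨fun p => ((a p.1.1 / b ^ (d p.1.1 - 1 - (p.1.2 : ℕ)) % b : ℕ) : ZMod b), fun j => ?_⟩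
  have hds := digit_sum hb (a j) (d j)
  rw [Nat.mod_eq_of_lt (ha j)] at hds
  rw [← hds]
  unfold encSel
  refine Finset.sum_congr rfl fun i hi => ?_
  have hi' : i < d j := Finset.mem_range.mp hi
  have h1 : d j - 1 - i < d j := by omega
  have h2 : d j - 1 - i < m := lt_of_lt_of_le h1 (hdm j)
  rw [dif_pos (⟨h2, h1⟩ : d j - 1 - i < m ∧ d j - 1 - i < d j)]
  congr 1
  show (((a j / b ^ (d j - 1 - (d j - 1 - i)) % b : ℕ) : ZMod b)).val = a j / b ^ i % b
  have hidx : d j - 1 - (d j - 1 - i) = i := by omega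
  rw [hidx]
  exact ZMod.val_natCast_of_lt (Nat.mod_lt _ hb)

lemma card_index {d : Fin s → ℕ} (hdm : ∀ j, d j ≤ m) :
    Fintype.card {p : Fin s × Fin m // (p.2 : ℕ) < d p.1} = ∑ j, d j := by
  classical
  rw [Fintype.card_subtype, Finset.card_filter, Fintype.sum_prod_type]
  refine Finset.sum_congr rfl fun j _ => ?_
  rw [Fin.sum_univ_eq_sum_range (fun r => if r < d j then 1 else 0) m]
  rw [← Finset.card_filter]
  rw [show (Finset.range m).filter (fun r => r < d j) = Finset.range (d j) from by
    ext x
    simp only [Finset.mem_filter, Finset.mem_range]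
    have := hdm j
    omega]
  exact Finset.card_range (d j)

end Selection
section Bridge

lemma li_iff_bijective {b m s : ℕ} [Fact b.Prime] {d : Fin s → ℕ}
    (C : Fin s → Matrix (Fin m) (Fin m) (ZMod b))
    (hcard : Fintype.card {p : Fin s × Fin m // (p.2 : ℕ) < d p.1} = m) :
    LinearIndependent (ZMod b)
        (fun p : {p : Fin s × Fin m // (p.2 : ℕ) < d p.1} => C p.1.1 p.1.2)
      ↔ Function.Bijective
          (fun (v : Fin m → ZMod b) (p : {p : Fin s × Fin m // (p.2 : ℕ) < d p.1}) =>
            (C p.1.1).mulVec v p.1.2) := by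
  classical
  set ι := {p : Fin s × Fin m // (p.2 : ℕ) < d p.1}
  set M : Matrix ι (Fin m) (ZMod b) := fun p k => C p.1.1 p.1.2 k with hM
  have hΨ : (fun (v : Fin m → ZMod b) (p : ι) => (C p.1.1).mulVec v p.1.2) = M.mulVec := by
    funext v p; rfl
  rw [hΨ]
  have hcard' : m = Fintype.card (Fin m) := (Fintype.card_fin m).symm
  let e : ι ≃ Fin m := Fintype.equivFinOfCardEq hcard
  set N : Matrix (Fin m) (Fin m) (ZMod b) := M.submatrix e.symm id with hN
  have hrows : LinearIndependent (ZMod b) (fun p : ι => C p.1.1 p.1.2)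
      ↔ LinearIndependent (ZMod b) (fun i : Fin m => N i) := by
    rw [show (fun i : Fin m => N i) = (fun p : ι => C p.1.1 p.1.2) ∘ e.symm from rfl]
    exact (linearIndependent_equiv e.symm).symm
  have hmv : N.mulVec = (fun f : ι → ZMod b => f ∘ e.symm) ∘ M.mulVec := by
    funext v i; rfl
  have hg : Function.Bijective (fun f : ι → ZMod b => f ∘ e.symm) :=
    (Equiv.arrowCongr e (Equiv.refl (ZMod b))).bijective
  have hNB : Function.Bijective N.mulVec ↔ Function.Bijective M.mulVec := by
    rw [hmv]
    exact Function.Bijective.of_comp_iff' hg M.mulVec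
  rw [hrows, show (LinearIndependent (ZMod b) fun i : Fin m => N i) ↔ IsUnit N from
    Matrix.linearIndependent_rows_iff_isUnit, ← hNB]
  constructor
  · intro hu
    exact ⟨Matrix.mulVec_injective_iff_isUnit.mpr hu,
      Matrix.mulVec_surjective_iff_isUnit.mpr hu⟩
  · intro hbij
    exact Matrix.mulVec_injective_iff_isUnit.mp hbij.1

end Bridge

/-- Niederreiter's criterion for digital `(0,m,s)`-nets: the digital point set generated by
`m × m` matrices `C_1, …, C_s` over `F_b` (`b` prime) is a `(0,m,s)`-net in base `b` if and
only if for all `d_1 + ⋯ + d_s = m` the system consisting of the first `d_j` rows of `C_j`,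
`j = 1, …, s`, is linearly independent over `F_b`. -/
theorem digital_net_iff_linearIndependent (b m s : ℕ) (hb : b.Prime) (hs : 1 ≤ s)
    (hm : 1 ≤ m) (C : Fin s → Matrix (Fin m) (Fin m) (ZMod b)) :
    IsNet b s m 0 (((Finset.range (b ^ m)).val.map fun n => digitalPoint b m s C n)) ↔
      ∀ d : Fin s → ℕ, (∑ j, d j) = m →
        LinearIndependent (ZMod b)
          (fun p : {p : Fin s × Fin m // (p.2 : ℕ) < d p.1} => C p.1.1 p.1.2) := by
  classical
  haveI : Fact b.Prime := ⟨hb⟩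
  haveI : NeZero b := ⟨hb.pos.ne'⟩
  have hb1 : 1 ≤ b := hb.pos
  -- the counting reduction
  have hcount : ∀ (d a : Fin s → ℕ), (∀ j, d j ≤ m) → (∀ j, a j < b ^ d j) →
      Multiset.card ((((Finset.range (b ^ m)).val.map fun n => digitalPoint b m s C n)).filter
        fun x => ∀ j, (a j : ℝ) / (b : ℝ) ^ d j ≤ x j ∧
          x j < ((a j : ℝ) + 1) / (b : ℝ) ^ d j)
      = (Finset.univ.filter fun v : Fin m → ZMod b =>
          ∀ j, encSel b d (fun p : {p : Fin s × Fin m // (p.2 : ℕ) < d p.1} =>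
            (C p.1.1).mulVec v p.1.2) j = a j).card := by
    intro d a hdm ha
    rw [Multiset.filter_map, Multiset.card_map]
    have h1 : ((Finset.range (b ^ m)).val.filter
        ((fun x => ∀ j, (a j : ℝ) / (b : ℝ) ^ d j ≤ x j ∧
          x j < ((a j : ℝ) + 1) / (b : ℝ) ^ d j) ∘ (fun n => digitalPoint b m s C n)))
        = ((Finset.range (b ^ m)).filter fun n =>
            (∀ j, encSel b d (fun p : {p : Fin s × Fin m // (p.2 : ℕ) < d p.1} =>
              (C p.1.1).mulVec (digitVec b m n) p.1.2) j = a j)).val := by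
      rw [Finset.filter_val]
      apply Multiset.filter_congr
      intro n _
      simp only [Function.comp]
      refine forall_congr' fun j => ?_
      rw [digitalPoint_coord hb1 C n j,
        interval_iff hb1 (hdm j) (ha j) (coordNat_lt (C j) (digitVec b m n)),
        coordNat_div (hdm j), encSel_mulVec hdm]
    rw [h1]
    have h2 := card_digit_filter (b := b) (m := m)
      (fun v => ∀ j, encSel b d (fun p : {p : Fin s × Fin m // (p.2 : ℕ) < d p.1} =>
        (C p.1.1).mulVec v p.1.2) j = a j)
    exact h2
  constructor
  · -- net → linear independence
    rintro ⟨hcardP, hbounds, hcnt⟩ d hd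
    have hdm : ∀ j, d j ≤ m := fun j => by
      rw [← hd]
      exact Finset.single_le_sum (f := d) (fun _ _ => Nat.zero_le _) (Finset.mem_univ j)
    have hcard : Fintype.card {p : Fin s × Fin m // (p.2 : ℕ) < d p.1} = m := by
      rw [card_index hdm, hd]
    rw [li_iff_bijective C hcard]
    rw [Fintype.bijective_iff_injective_and_card]
    constructor
    · intro v v' hvv
      set Ψ := fun (v : Fin m → ZMod b)
        (p : {p : Fin s × Fin m // (p.2 : ℕ) < d p.1}) => (C p.1.1).mulVec v p.1.2 with hΨ
      set a : Fin s → ℕ := fun j => encSel b d (Ψ v) j with haa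
      have ha : ∀ j, a j < b ^ d j := fun j => encSel_lt d (Ψ v) j
      have h1 := hcnt d a (by rw [Nat.sub_zero]; exact hd) ha
      rw [hcount d a hdm ha, pow_zero] at h1
      have hv : v ∈ Finset.univ.filter fun u : Fin m → ZMod b =>
          ∀ j, encSel b d (Ψ u) j = a j :=
        Finset.mem_filter.mpr ⟨Finset.mem_univ _, fun j => rfl⟩
      have hv' : v' ∈ Finset.univ.filter fun u : Fin m → ZMod b =>
          ∀ j, encSel b d (Ψ u) j = a j :=
        Finset.mem_filter.mpr ⟨Finset.mem_univ _, fun j => by rw [← hvv]⟩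
      exact Finset.card_le_one.mp (le_of_eq h1) v hv v' hv'
    · rw [Fintype.card_fun, Fintype.card_fun, ZMod.card, Fintype.card_fin, hcard]
  · -- linear independence → net
    intro hli
    refine ⟨by simp, ?_, ?_⟩
    · intro x hx j
      obtain ⟨n, _, rfl⟩ := Multiset.mem_map.mp hx
      rw [digitalPoint_coord hb1 C n j]
      constructor
      · positivity
      · rw [div_lt_one (by positivity)]
        have := coordNat_lt (C j) (digitVec b m n)
        exact_mod_cast this
    · intro d a hd ha
      rw [Nat.sub_zero] at hd
      have hdm : ∀ j, d j ≤ m := fun j => by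
        rw [← hd]
        exact Finset.single_le_sum (f := d) (fun _ _ => Nat.zero_le _) (Finset.mem_univ j)
      have hcard : Fintype.card {p : Fin s × Fin m // (p.2 : ℕ) < d p.1} = m := by
        rw [card_index hdm, hd]
      have hbij := (li_iff_bijective C hcard).mp (hli d hd)
      rw [hcount d a hdm ha, pow_zero]
      obtain ⟨w, hw⟩ := encSel_exists (b := b) (m := m) (d := d) hdm a ha
      obtain ⟨v₀, hv₀⟩ := hbij.2 w
      rw [Finset.card_eq_one]
      refine ⟨v₀, ?_⟩
      ext v
      simp only [Finset.mem_filter, Finset.mem_univ, true_and, Finset.mem_singleton]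
      constructor
      · intro hcond
        apply hbij.1
        rw [hv₀]
        exact encSel_inj fun j => by rw [hcond j, hw j]
      · intro hveq j
        rw [hveq]
        rw [show (fun p : {p : Fin s × Fin m // (p.2 : ℕ) < d p.1} =>
          (C p.1.1).mulVec v₀ p.1.2) = w from hv₀, hw j]
end
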